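/- Let V be a nonzero finite-dimensional real normed vector space and let ρ : GL₂(ℝ) → GL(V) be a continuous group homomorphism. Let (φ_k)_{k∈ℕ} be positive reals with φ_k → 0 and let (N_k)_{k∈ℕ} be natural numbers with N_k φ_k bounded. For each k, let M_{1,k}, …, M_{N_k,k} ∈ GL(V) be such that for every m ∈ ℕ one has sup_{1 ≤ j ≤ N_k} ‖M_{j,k} − ρ(A)‖ = o(φ_k^m) as k → ∞, where A = [[1,1],[0,1]]. Then for every m ∈ ℕ the ordered products satisfy ‖M_{N_k,k} ⋯ M_{1,k} − ρ(A^{N_k})‖ = o(φ_k^m) as k → ∞. -/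

import Mathlib

open Asymptotics Filter Matrix Finset
noncomputable def dU (t : ℝ) : GL (Fin 2) ℝ :=
  ⟨!![max t 1, 0; 0, 1], !![(max t 1)⁻¹, 0; 0, 1], by
    have h : max t 1 ≠ 0 := by positivity
    rw [Matrix.mul_fin_two, Matrix.one_fin_two]
    simp [mul_inv_cancel₀ h], by
    have h : max t 1 ≠ 0 := by positivity
    rw [Matrix.mul_fin_two, Matrix.one_fin_two]
    simp [inv_mul_cancel₀ h]⟩

noncomputable def dV (t : ℝ) : GL (Fin 2) ℝ :=
  ⟨!![(max t 1)⁻¹, 0; 0, 1], !![max t 1, 0; 0, 1], by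
    have h : max t 1 ≠ 0 := by positivity
    rw [Matrix.mul_fin_two, Matrix.one_fin_two]
    simp [inv_mul_cancel₀ h], by
    have h : max t 1 ≠ 0 := by positivity
    rw [Matrix.mul_fin_two, Matrix.one_fin_two]
    simp [mul_inv_cancel₀ h]⟩

lemma dU_inv (t : ℝ) : (dU t)⁻¹ = dV t := Units.ext rfl

lemma dU_mul (s t : ℝ) (hs : 1 ≤ s) (ht : 1 ≤ t) : dU s * dU t = dU (s * t) := by
  apply Units.ext
  have hs' : max s 1 = s := max_eq_left hs
  have ht' : max t 1 = t := max_eq_left ht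
  have hst : max (s*t) 1 = s*t := max_eq_left (by nlinarith)
  show (!![max s 1, 0; 0, 1] : Matrix (Fin 2) (Fin 2) ℝ) * !![max t 1, 0; 0, 1]
    = !![max (s*t) 1, 0; 0, 1]
  rw [Matrix.mul_fin_two, hs', ht', hst]
  norm_num

lemma dV_mul (s t : ℝ) (hs : 1 ≤ s) (ht : 1 ≤ t) : dV s * dV t = dV (s * t) := by
  apply Units.ext
  have hs' : max s 1 = s := max_eq_left hs
  have ht' : max t 1 = t := max_eq_left ht
  have hst : max (s*t) 1 = s*t := max_eq_left (by nlinarith)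
  show (!![(max s 1)⁻¹, 0; 0, 1] : Matrix (Fin 2) (Fin 2) ℝ) * !![(max t 1)⁻¹, 0; 0, 1]
    = !![(max (s*t) 1)⁻¹, 0; 0, 1]
  rw [Matrix.mul_fin_two, hs', ht', hst, mul_inv]
  norm_num

lemma max_ne_zero : ∀ t : ℝ, max t 1 ≠ 0 := fun t => by positivity

lemma dU_continuous : Continuous dU := by
  apply Units.continuous_iff.2
  constructor <;>
  · apply continuous_matrix
    intro i j
    fin_cases i <;> fin_cases j <;> simp [dU] <;>
      first
        | exact Continuous.inv₀ (by fun_prop) max_ne_zero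
        | fun_prop

lemma dV_continuous : Continuous dV := by
  apply Units.continuous_iff.2
  constructor <;>
  · apply continuous_matrix
    intro i j
    fin_cases i <;> fin_cases j <;> simp [dV] <;>
      first
        | exact Continuous.inv₀ (by fun_prop) max_ne_zero
        | fun_prop

lemma dU_one : dU 1 = 1 := by
  apply Units.ext
  show (!![max 1 1, 0; 0, 1] : Matrix (Fin 2) (Fin 2) ℝ) = 1
  rw [Matrix.one_fin_two]; norm_num

lemma matA_pow (n : ℕ) :
    (!![1, 1; 0, 1] : Matrix (Fin 2) (Fin 2) ℝ) ^ n = !![1, (n : ℝ); 0, 1] := by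
  induction n with
  | zero => rw [pow_zero, Matrix.one_fin_two]; norm_num
  | succ n ih =>
    rw [pow_succ, ih, Matrix.mul_fin_two]
    push_cast
    ring_nf

lemma conj_eq_pow (A : GL (Fin 2) ℝ) (hA : (A : Matrix (Fin 2) (Fin 2) ℝ) = !![1, 1; 0, 1])
    (dU : ℝ → GL (Fin 2) ℝ)
    (hdU : ∀ t, (dU t : Matrix (Fin 2) (Fin 2) ℝ) = !![max t 1, 0; 0, 1])
    (hdUinv : ∀ t, ((dU t)⁻¹ : GL (Fin 2) ℝ) = (!![(max t 1)⁻¹, 0; 0, 1] : Matrix (Fin 2) (Fin 2) ℝ))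
    (n : ℕ) (hn : 1 ≤ n) :
    dU n * A * (dU n)⁻¹ = A ^ n := by
  apply Units.ext
  have hn' : ((n:ℝ)) ⊔ 1 = (n:ℝ) := max_eq_left (by exact_mod_cast hn)
  have hnz : (n:ℝ) ≠ 0 := by positivity
  rw [Units.val_mul, Units.val_mul, hdU, hdUinv, hA, Units.val_pow_eq_pow_val, hA, matA_pow,
    hn', Matrix.mul_fin_two, Matrix.mul_fin_two]
  norm_num [mul_inv_cancel₀ hnz]

lemma doubling_bound (g : ℝ → ℝ)
    (hg : ∀ s t, 1 ≤ s → 1 ≤ t → g (s * t) ≤ g s * g t)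
    (hgpos : ∀ t, 0 ≤ g t)
    (L : ℝ) (hL1 : 1 ≤ L) (hL : ∀ t, 1 ≤ t → t ≤ 2 → g t ≤ L) :
    ∀ j : ℕ, ∀ t : ℝ, 1 ≤ t → t ≤ 2 ^ j → g t ≤ L ^ (j + 1) := by
  intro j
  induction j with
  | zero =>
    intro t h1 h2
    norm_num at h2
    simpa using hL t h1 (by linarith)
  | succ j ih =>
    intro t h1 h2
    by_cases h : t ≤ 2
    · calc g t ≤ L := hL t h1 h
        _ ≤ L ^ (j + 2) := le_self_pow₀ hL1 (by omega)
    · push_neg at h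
      have h12 : (1:ℝ) ≤ t / 2 := by linarith
      have h22 : t / 2 ≤ 2 ^ j := by
        rw [div_le_iff₀ (by norm_num : (0:ℝ) < 2)]
        calc t ≤ 2 ^ (j + 1) := h2
          _ = 2 ^ j * 2 := by ring
      have ht2 : t = 2 * (t / 2) := by ring
      calc g t = g (2 * (t / 2)) := by rw [← ht2]
        _ ≤ g 2 * g (t / 2) := hg 2 (t / 2) one_le_two h12
        _ ≤ L * L ^ (j + 1) :=
            mul_le_mul (hL 2 one_le_two le_rfl) (ih (t / 2) h12 h22) (hgpos _)
              (le_trans zero_le_one hL1)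
        _ = L ^ (j + 2) := by ring

lemma prod_sub_pow_eq {R : Type*} [Ring R] (f : ℕ → R) (B : R) (n : ℕ) :
    ((List.range n).reverse.map f).prod - B ^ n
      = ∑ j ∈ Finset.range n,
          B ^ (n - 1 - j) * ((f j - B) * ((List.range j).reverse.map f).prod) := by
  induction n with
  | zero => simp
  | succ n ih =>
    have hP : ((List.range (n + 1)).reverse.map f).prod
        = f n * ((List.range n).reverse.map f).prod := by
      rw [List.range_succ, List.reverse_append]
      simp
    have key : f n * ((List.range n).reverse.map f).prod - B ^ (n + 1)
        = (f n - B) * ((List.range n).reverse.map f).prod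
          + B * (((List.range n).reverse.map f).prod - B ^ n) := by noncomm_ring; rw [pow_mul_comm']
    rw [hP, key, ih, Finset.sum_range_succ, Finset.mul_sum]
    have hlast : n + 1 - 1 - n = 0 := by omega
    rw [hlast, pow_zero, one_mul]
    rw [add_comm]
    congr 1
    apply Finset.sum_congr rfl
    intro j hj
    rw [Finset.mem_range] at hj
    rw [← mul_assoc, ← pow_succ']
    congr 2
    omega

lemma one_add_pow_sub_one_le (x : ℝ) (hx : 0 ≤ x) (n : ℕ) :
    (1 + x) ^ n - 1 ≤ n * x * (1 + x) ^ n := by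
  induction n with
  | zero => simp
  | succ n ih =>
    have h1 : (0:ℝ) ≤ (1 + x) ^ n := by positivity
    have h2 : (1 + x) ^ n ≤ (1 + x) ^ (n + 1) :=
      pow_le_pow_right₀ (by linarith) (by omega)
    have : (1 + x) ^ (n + 1) - 1 = ((1 + x) ^ n - 1) + x * (1 + x) ^ n := by ring
    rw [this]
    push_cast
    nlinarith [mul_le_mul_of_nonneg_left h2 (by positivity : (0:ℝ) ≤ (n:ℝ) * x), mul_le_mul_of_nonneg_left h2 hx]

lemma one_add_pow_le_three (x : ℝ) (hx : 0 ≤ x) (n : ℕ) (h : n * x ≤ 1) :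
    (1 + x) ^ n ≤ 3 := by
  calc (1 + x) ^ n ≤ Real.exp x ^ n :=
        pow_le_pow_left₀ (by linarith) (by linarith [Real.add_one_le_exp x]) n
    _ = Real.exp (n * x) := (Real.exp_nat_mul x n).symm
    _ ≤ Real.exp 1 := Real.exp_le_exp.2 h
    _ ≤ 3 := by linarith [Real.exp_one_lt_d9]

lemma prod_sub_pow_norm {R : Type*} [NormedRing R] (f : ℕ → R) (B : R) (u W : ℝ)
    (hu : 0 ≤ u) (hW1 : 1 ≤ W) :
    ∀ n : ℕ, (∀ j, j < n → ‖f j - B‖ ≤ u) → (∀ i, i ≤ n → ‖B ^ i‖ ≤ W) →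
      ‖((List.range n).reverse.map f).prod - B ^ n‖ ≤ W * ((1 + W * u) ^ n - 1) := by
  intro n
  induction n using Nat.strong_induction_on with
  | _ n ihn =>
    intro hf hW
    have hWu : (0:ℝ) ≤ W * u := by positivity
    have hx1 : (1:ℝ) ≤ 1 + W * u := by linarith
    rw [prod_sub_pow_eq]
    have hterm : ∀ j ∈ Finset.range n,
        ‖B ^ (n - 1 - j) * ((f j - B) * ((List.range j).reverse.map f).prod)‖
          ≤ W * (u * (W * (1 + W * u) ^ j)) := by
      intro j hj
      rw [Finset.mem_range] at hj
      have hPj : ‖((List.range j).reverse.map f).prod‖ ≤ W * (1 + W * u) ^ j := by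
        have hdiff := ihn j hj (fun i hi => hf i (lt_trans hi hj))
          (fun i hi => hW i (le_trans hi (le_of_lt hj)))
        have : ‖((List.range j).reverse.map f).prod‖
            ≤ ‖B ^ j‖ + ‖((List.range j).reverse.map f).prod - B ^ j‖ := by
          have := norm_add_le (B ^ j) (((List.range j).reverse.map f).prod - B ^ j)
          simpa using this
        calc ‖((List.range j).reverse.map f).prod‖
            ≤ ‖B ^ j‖ + ‖((List.range j).reverse.map f).prod - B ^ j‖ := this
          _ ≤ W + W * ((1 + W * u) ^ j - 1) := add_le_add (hW j (by omega)) hdiff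
          _ = W * (1 + W * u) ^ j := by ring
      calc ‖B ^ (n - 1 - j) * ((f j - B) * ((List.range j).reverse.map f).prod)‖
          ≤ ‖B ^ (n - 1 - j)‖ * ‖(f j - B) * ((List.range j).reverse.map f).prod‖ :=
            norm_mul_le _ _
        _ ≤ ‖B ^ (n - 1 - j)‖ * (‖f j - B‖ * ‖((List.range j).reverse.map f).prod‖) := by
            have := norm_mul_le (f j - B) (((List.range j).reverse.map f).prod)
            exact mul_le_mul_of_nonneg_left this (norm_nonneg _)
        _ ≤ W * (u * (W * (1 + W * u) ^ j)) := by
            apply mul_le_mul (hW _ (by omega))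
            · apply mul_le_mul (hf j hj) hPj (norm_nonneg _) hu
            · positivity
            · linarith
    calc ‖∑ j ∈ Finset.range n,
          B ^ (n - 1 - j) * ((f j - B) * ((List.range j).reverse.map f).prod)‖
        ≤ ∑ j ∈ Finset.range n,
            ‖B ^ (n - 1 - j) * ((f j - B) * ((List.range j).reverse.map f).prod)‖ :=
          norm_sum_le _ _
      _ ≤ ∑ j ∈ Finset.range n, W * (u * (W * (1 + W * u) ^ j)) :=
          Finset.sum_le_sum hterm
      _ = W * ((∑ j ∈ Finset.range n, (1 + W * u) ^ j) * (W * u)) := by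
          rw [Finset.sum_mul, Finset.mul_sum]
          exact Finset.sum_congr rfl (fun j _ => by ring)
      _ = W * ((1 + W * u) ^ n - 1) := by
          have := geom_sum_mul (1 + W * u) n
          rw [add_sub_cancel_left] at this
          rw [this]

lemma Bpow_bound (E : Type*) [NormedAddCommGroup E] [NormedSpace ℝ E] [Nontrivial E]
    (ρ : GL (Fin 2) ℝ →* (E →L[ℝ] E)ˣ)
    (hρcont : Continuous fun g : GL (Fin 2) ℝ => ((ρ g : (E →L[ℝ] E)ˣ) : E →L[ℝ] E))
    (A : GL (Fin 2) ℝ) (hA : (A : Matrix (Fin 2) (Fin 2) ℝ) = !![1, 1; 0, 1]) :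
    ∃ (K : ℝ) (D : ℕ), 1 ≤ K ∧ ∀ n : ℕ,
      ‖((ρ A : (E →L[ℝ] E)ˣ) : E →L[ℝ] E) ^ n‖ ≤ K * ((n : ℝ) + 1) ^ D := by
  set g : ℝ → ℝ := fun t => ‖((ρ (dU t) : (E →L[ℝ] E)ˣ) : E →L[ℝ] E)‖ with hgdef
  set h : ℝ → ℝ := fun t => ‖((ρ (dV t) : (E →L[ℝ] E)ˣ) : E →L[ℝ] E)‖ with hhdef
  have hgc : Continuous g := (hρcont.comp dU_continuous).norm
  have hhc : Continuous h := (hρcont.comp dV_continuous).norm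
  obtain ⟨x, hx, hxm⟩ := (isCompact_Icc (a := (1:ℝ)) (b := 2)).exists_isMaxOn
    (Set.nonempty_Icc.2 one_le_two) hgc.continuousOn
  obtain ⟨y, hy, hym⟩ := (isCompact_Icc (a := (1:ℝ)) (b := 2)).exists_isMaxOn
    (Set.nonempty_Icc.2 one_le_two) hhc.continuousOn
  set L : ℝ := max 1 (max (g x) (h y)) with hLdef
  have hL1 : (1:ℝ) ≤ L := le_max_left _ _
  have hgL : ∀ t, 1 ≤ t → t ≤ 2 → g t ≤ L := fun t h1 h2 =>
    le_trans (hxm ⟨h1, h2⟩) (le_trans (le_max_left _ _) (le_max_right _ _))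
  have hhL : ∀ t, 1 ≤ t → t ≤ 2 → h t ≤ L := fun t h1 h2 =>
    le_trans (hym ⟨h1, h2⟩) (le_trans (le_max_right _ _) (le_max_right _ _))
  have hgsub : ∀ s t, 1 ≤ s → 1 ≤ t → g (s * t) ≤ g s * g t := by
    intro s t hs ht
    have hst : dU (s * t) = dU s * dU t := (dU_mul s t hs ht).symm
    simp only [hgdef]
    rw [hst, _root_.map_mul, Units.val_mul]
    exact norm_mul_le _ _
  have hhsub : ∀ s t, 1 ≤ s → 1 ≤ t → h (s * t) ≤ h s * h t := by
    intro s t hs ht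
    have hst : dV (s * t) = dV s * dV t := (dV_mul s t hs ht).symm
    simp only [hhdef]
    rw [hst, _root_.map_mul, Units.val_mul]
    exact norm_mul_le _ _
  have hgb := doubling_bound g hgsub (fun t => norm_nonneg _) L hL1 hgL
  have hhb := doubling_bound h hhsub (fun t => norm_nonneg _) L hL1 hhL
  set d : ℕ := ⌈L⌉₊ with hddef
  have hLd : L ≤ 2 ^ d := by
    calc L ≤ (⌈L⌉₊ : ℝ) := Nat.le_ceil L
      _ ≤ ((2 ^ d : ℕ) : ℝ) := by exact_mod_cast (Nat.lt_two_pow_self (n := d)).le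
      _ = 2 ^ d := by push_cast; ring
  set nB : ℝ := ‖((ρ A : (E →L[ℝ] E)ˣ) : E →L[ℝ] E)‖ with hnBdef
  refine ⟨(16:ℝ) ^ d * max 1 nB, 2 * d, ?_, ?_⟩
  · have : (1:ℝ) ≤ (16:ℝ) ^ d := one_le_pow₀ (by norm_num)
    nlinarith [le_max_left (1:ℝ) nB]
  intro n
  have hK1 : (1:ℝ) ≤ (16:ℝ) ^ d * max 1 nB := by
    have : (1:ℝ) ≤ (16:ℝ) ^ d := one_le_pow₀ (by norm_num)
    nlinarith [le_max_left (1:ℝ) nB]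
  rcases Nat.eq_zero_or_pos n with hn | hn
  · subst hn
    simp only [pow_zero, norm_one, Nat.cast_zero, zero_add, one_pow, mul_one]
    exact hK1
  -- n ≥ 1
  set j : ℕ := Nat.log 2 n with hjdef
  have hn1 : (1:ℝ) ≤ (n:ℝ) := by exact_mod_cast hn
  have hn2 : (n:ℝ) ≤ 2 ^ (j + 1) := by
    have := (Nat.lt_pow_succ_log_self (by norm_num : 1 < 2) n).le
    exact_mod_cast this
  have h2j : (2:ℝ) ^ j ≤ (n:ℝ) := by
    have := Nat.pow_log_le_self 2 hn.ne'
    exact_mod_cast this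
  have hgn : g n ≤ L ^ (j + 2) := hgb (j + 1) n hn1 hn2
  have hhn : h n ≤ L ^ (j + 2) := hhb (j + 1) n hn1 hn2
  have hconv : L ^ (j + 2) ≤ (n:ℝ) ^ d * 4 ^ d := by
    calc L ^ (j + 2) ≤ ((2:ℝ) ^ d) ^ (j + 2) :=
          pow_le_pow_left₀ (le_trans zero_le_one hL1) hLd _
      _ = ((2:ℝ) ^ j) ^ d * (4:ℝ) ^ d := by
          rw [← pow_mul, ← pow_mul]
          have : (4:ℝ) = 2 ^ 2 := by norm_num
          rw [this, ← pow_mul, ← pow_add]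
          ring_nf
      _ ≤ (n:ℝ) ^ d * 4 ^ d :=
          mul_le_mul_of_nonneg_right (pow_le_pow_left₀ (by positivity) h2j d) (by positivity)
  -- conjugation identity
  have hc := conj_eq_pow A hA dU (fun t => rfl) (fun t => by rw [dU_inv]; rfl) n hn
  have hAn : ((ρ A : (E →L[ℝ] E)ˣ) : E →L[ℝ] E) ^ n
      = ((ρ (dU n) : (E →L[ℝ] E)ˣ) : E →L[ℝ] E)
        * (((ρ A : (E →L[ℝ] E)ˣ) : E →L[ℝ] E)
          * ((ρ (dV n) : (E →L[ℝ] E)ˣ) : E →L[ℝ] E)) := by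
    calc ((ρ A : (E →L[ℝ] E)ˣ) : E →L[ℝ] E) ^ n = (((ρ A) ^ n : (E →L[ℝ] E)ˣ) : E →L[ℝ] E) :=
          (Units.val_pow_eq_pow_val _ _).symm
      _ = ((ρ (A ^ n) : (E →L[ℝ] E)ˣ) : E →L[ℝ] E) := by rw [map_pow]
      _ = ((ρ (dU n * A * (dU n)⁻¹) : (E →L[ℝ] E)ˣ) : E →L[ℝ] E) := by rw [hc]
      _ = _ := by rw [dU_inv, _root_.map_mul, _root_.map_mul, Units.val_mul, Units.val_mul, mul_assoc]
  have hnorm : ‖((ρ A : (E →L[ℝ] E)ˣ) : E →L[ℝ] E) ^ n‖ ≤ g n * (nB * h n) := by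
    rw [hAn]
    calc ‖_ * (_ * _)‖ ≤ g n * ‖((ρ A : (E →L[ℝ] E)ˣ) : E →L[ℝ] E)
          * ((ρ (dV n) : (E →L[ℝ] E)ˣ) : E →L[ℝ] E)‖ := norm_mul_le _ _
      _ ≤ g n * (nB * h n) :=
          mul_le_mul_of_nonneg_left (norm_mul_le _ _) (norm_nonneg _)
  have hgn' : g n ≤ (n:ℝ) ^ d * 4 ^ d := le_trans hgn hconv
  have hhn' : h n ≤ (n:ℝ) ^ d * 4 ^ d := le_trans hhn hconv
  have hfinal : g n * (nB * h n) ≤ (16:ℝ) ^ d * max 1 nB * ((n:ℝ) + 1) ^ (2 * d) := by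
    have hnB0 : 0 ≤ nB := norm_nonneg _
    have h1 : g n * (nB * h n) ≤ ((n:ℝ) ^ d * 4 ^ d) * (nB * ((n:ℝ) ^ d * 4 ^ d)) := by
      apply mul_le_mul hgn' _ (by positivity) (by positivity)
      exact mul_le_mul_of_nonneg_left hhn' hnB0
    have h2 : ((n:ℝ) ^ d * 4 ^ d) * (nB * ((n:ℝ) ^ d * 4 ^ d))
        = (16:ℝ) ^ d * nB * ((n:ℝ) ^ d * (n:ℝ) ^ d) := by
      have : (16:ℝ) ^ d = 4 ^ d * 4 ^ d := by
        rw [← mul_pow]; norm_num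
      rw [this]; ring
    have h3 : (n:ℝ) ^ d * (n:ℝ) ^ d = (n:ℝ) ^ (2 * d) := by
      rw [← pow_add]; ring_nf
    have h4 : (n:ℝ) ^ (2 * d) ≤ ((n:ℝ) + 1) ^ (2 * d) :=
      pow_le_pow_left₀ (by positivity) (by linarith) _
    calc g n * (nB * h n) ≤ (16:ℝ) ^ d * nB * ((n:ℝ) ^ (2*d)) := by
          rw [← h3]; linarith [h1, h2]
      _ ≤ (16:ℝ) ^ d * max 1 nB * (((n:ℝ)+1) ^ (2*d)) := by
          apply mul_le_mul _ h4 (by positivity) (by positivity)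
          exact mul_le_mul_of_nonneg_left (le_max_right _ _) (by positivity)
  exact le_trans hnorm hfinal


/-- Let `E` be a nonzero finite-dimensional real normed vector space and
`ρ : GL₂(ℝ) → GL(E)` a continuous group homomorphism. Let `φ_k > 0`, `φ_k → 0`, `N_k ∈ ℕ`
with `N_k φ_k` bounded, and let `M_{1,k}, …, M_{N_k,k} ∈ GL(E)` satisfy
`sup_{1 ≤ j ≤ N_k} ‖M_{j,k} − ρ(A)‖ = o(φ_k^m)` for every `m`, where `A = [[1,1],[0,1]]`.
Then for every `m` the ordered products satisfy
`‖M_{N_k,k} ⋯ M_{1,k} − ρ(A^{N_k})‖ = o(φ_k^m)` as `k → ∞`. -/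
theorem statement11 (E : Type*) [NormedAddCommGroup E] [NormedSpace ℝ E]
    [FiniteDimensional ℝ E] [Nontrivial E]
    (ρ : GL (Fin 2) ℝ →* (E →L[ℝ] E)ˣ)
    (hρcont : Continuous fun g : GL (Fin 2) ℝ => ((ρ g : (E →L[ℝ] E)ˣ) : E →L[ℝ] E))
    (φ : ℕ → ℝ) (hφpos : ∀ k, 0 < φ k)
    (hφ0 : Tendsto φ atTop (nhds 0))
    (N : ℕ → ℕ) (hNbdd : ∃ C : ℝ, ∀ k, (N k : ℝ) * φ k ≤ C)
    (M : ℕ → ℕ → (E →L[ℝ] E)ˣ)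
    (A : GL (Fin 2) ℝ) (hA : (A : Matrix (Fin 2) (Fin 2) ℝ) = !![1, 1; 0, 1])
    (hclose : ∀ m : ℕ, ∃ u : ℕ → ℝ,
      (∀ k, ∀ j, 1 ≤ j → j ≤ N k →
        ‖((M k j : (E →L[ℝ] E)ˣ) : E →L[ℝ] E) - ((ρ A : (E →L[ℝ] E)ˣ) : E →L[ℝ] E)‖ ≤ u k) ∧
      u =o[atTop] fun k => φ k ^ m) :
    ∀ m : ℕ,
      (fun k =>
        ‖((List.range (N k)).reverse.map
            (fun j => ((M k (j + 1) : (E →L[ℝ] E)ˣ) : E →L[ℝ] E))).prod -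
          ((ρ (A ^ N k) : (E →L[ℝ] E)ˣ) : E →L[ℝ] E)‖)
        =o[atTop] fun k => φ k ^ m := by
  intro m
  obtain ⟨K, D, hK1, hKB⟩ := Bpow_bound E ρ hρcont A hA
  obtain ⟨u, hu, huo⟩ := hclose (m + (2 * D + 1))
  obtain ⟨C0, hC0⟩ := hNbdd
  set C : ℝ := max C0 1 with hCdef
  have hC1 : (1:ℝ) ≤ C := le_max_right _ _
  have hNC : ∀ k, (N k : ℝ) * φ k ≤ C := fun k => le_trans (hC0 k) (le_max_left _ _)
  set B : E →L[ℝ] E := ((ρ A : (E →L[ℝ] E)ˣ) : E →L[ℝ] E) with hBdef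
  set c₁ : ℝ := 3 * (K * (C + 1) ^ D) * (K * (C + 1) ^ D) * C with hc1def
  set c₂ : ℝ := K * (C + 1) ^ D * C with hc2def
  have hc₁pos : 0 < c₁ := by positivity
  have hc₂pos : 0 < c₂ := by positivity
  rw [isLittleO_iff]
  intro ε hε
  set δ : ℝ := min (ε / c₁) (1 / c₂) with hδdef
  have hδpos : 0 < δ := lt_min (by positivity) (by positivity)
  have hδ1 : c₂ * δ ≤ 1 := by
    have : δ ≤ 1 / c₂ := min_le_right _ _
    rw [le_div_iff₀ hc₂pos] at this
    linarith
  have hδ2 : c₁ * δ ≤ ε := by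
    have : δ ≤ ε / c₁ := min_le_left _ _
    rw [le_div_iff₀ hc₁pos] at this
    linarith
  have hev1 : ∀ᶠ k in atTop, ‖u k‖ ≤ δ * ‖φ k ^ (m + (2 * D + 1))‖ := huo.def hδpos
  have hev2 : ∀ᶠ k in atTop, φ k ≤ 1 := hφ0.eventually (eventually_le_nhds one_pos)
  filter_upwards [hev1, hev2] with k hk1 hk2
  have hφk : 0 < φ k := hφpos k
  have hφm : ‖φ k ^ m‖ = φ k ^ m := Real.norm_of_nonneg (by positivity)
  rw [norm_norm, hφm]
  rcases Nat.eq_zero_or_pos (N k) with hNk | hNk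
  · simp only [hNk, List.range_zero, List.reverse_nil, List.map_nil, List.prod_nil, pow_zero,
      _root_.map_one, Units.val_one, sub_self, norm_zero]
    positivity
  · have hu0 : 0 ≤ u k := le_trans (norm_nonneg _) (hu k 1 le_rfl hNk)
    have huk : u k ≤ δ * φ k ^ (m + (2 * D + 1)) := by
      rw [Real.norm_of_nonneg hu0, Real.norm_of_nonneg (by positivity)] at hk1
      exact hk1
    set W : ℝ := K * ((N k : ℝ) + 1) ^ D with hWdef
    have hNk0 : (0:ℝ) ≤ (N k : ℝ) := Nat.cast_nonneg _
    have hW1 : 1 ≤ W := by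
      have h1 : (1:ℝ) ≤ ((N k : ℝ) + 1) ^ D := one_le_pow₀ (by linarith)
      nlinarith
    have hbnd := prod_sub_pow_norm
      (fun j => ((M k (j + 1) : (E →L[ℝ] E)ˣ) : E →L[ℝ] E)) B (u k) W hu0 hW1 (N k)
      (fun j hj => hu k (j + 1) (by omega) (by omega))
      (fun i hi => by
        refine le_trans (hKB i) ?_
        rw [hWdef]
        gcongr)
    have hρpow : ((ρ (A ^ N k) : (E →L[ℝ] E)ˣ) : E →L[ℝ] E) = B ^ N k := by
      rw [map_pow]
      exact Units.val_pow_eq_pow_val _ _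
    rw [hρpow]
    -- key auxiliary multiplicative bounds
    have hN1φ : ((N k : ℝ) + 1) * φ k ≤ C + 1 := by
      have := hNC k
      nlinarith
    have hWφ : W * φ k ^ D ≤ K * (C + 1) ^ D := by
      have h2 : (((N k : ℝ) + 1) * φ k) ^ D ≤ (C + 1) ^ D :=
        pow_le_pow_left₀ (by positivity) hN1φ D
      calc W * φ k ^ D = K * (((N k : ℝ) + 1) * φ k) ^ D := by
            rw [hWdef, mul_pow]; ring
        _ ≤ K * (C + 1) ^ D := by
            apply mul_le_mul_of_nonneg_left h2 (by linarith)
    have hWpos : 0 < W := lt_of_lt_of_le one_pos hW1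
    have hφD1 : (0:ℝ) < φ k ^ (D + 1) := by positivity
    have hφ2D1 : (0:ℝ) < φ k ^ (2 * D + 1) := by positivity
    have hφexp : φ k ^ (m + (2 * D + 1)) ≤ φ k ^ (D + 1) :=
      pow_le_pow_of_le_one (le_of_lt hφk) hk2 (by omega)
    -- N * (W * u) ≤ 1
    have hNWu : (N k : ℝ) * (W * u k) ≤ 1 := by
      have h5 : ((N k : ℝ) * (W * u k)) * φ k ^ (D + 1)
          ≤ 1 * φ k ^ (D + 1) := by
        have e1 : ((N k : ℝ) * (W * u k)) * φ k ^ (D + 1)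
            = ((N k : ℝ) * φ k) * ((W * φ k ^ D) * u k) := by
          rw [pow_succ]; ring
        rw [e1, one_mul]
        calc ((N k : ℝ) * φ k) * ((W * φ k ^ D) * u k)
            ≤ C * ((K * (C + 1) ^ D) * u k) := by
              apply mul_le_mul (hNC k)
                (mul_le_mul_of_nonneg_right hWφ hu0)
                (by positivity) (by linarith)
          _ = c₂ * u k := by rw [hc2def]; ring
          _ ≤ c₂ * (δ * φ k ^ (m + (2 * D + 1))) :=
              mul_le_mul_of_nonneg_left huk (le_of_lt hc₂pos)
          _ = (c₂ * δ) * φ k ^ (m + (2 * D + 1)) := by ring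
          _ ≤ 1 * φ k ^ (m + (2 * D + 1)) :=
              mul_le_mul_of_nonneg_right hδ1 (by positivity)
          _ ≤ φ k ^ (D + 1) := by rw [one_mul]; exact hφexp
      exact le_of_mul_le_mul_right (by linarith) hφD1
    -- final chain
    have hfin : ‖((List.range (N k)).reverse.map
          (fun j => ((M k (j + 1) : (E →L[ℝ] E)ˣ) : E →L[ℝ] E))).prod - B ^ N k‖
        ≤ 3 * (N k : ℝ) * W * W * u k := by
      have h6 : (1 + W * u k) ^ (N k) - 1
          ≤ (N k : ℝ) * (W * u k) * (1 + W * u k) ^ (N k) :=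
        one_add_pow_sub_one_le (W * u k) (by positivity) (N k)
      have h7 : (1 + W * u k) ^ (N k) ≤ 3 :=
        one_add_pow_le_three (W * u k) (by positivity) (N k) hNWu
      calc ‖_ - B ^ N k‖ ≤ W * ((1 + W * u k) ^ (N k) - 1) := hbnd
        _ ≤ W * ((N k : ℝ) * (W * u k) * (1 + W * u k) ^ (N k)) :=
            mul_le_mul_of_nonneg_left h6 (le_of_lt hWpos)
        _ ≤ W * ((N k : ℝ) * (W * u k) * 3) := by
            apply mul_le_mul_of_nonneg_left _ (le_of_lt hWpos)
            exact mul_le_mul_of_nonneg_left h7 (by positivity)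
        _ = 3 * (N k : ℝ) * W * W * u k := by ring
    have hmain : 3 * (N k : ℝ) * W * W * u k ≤ ε * φ k ^ m := by
      have h8 : (3 * (N k : ℝ) * W * W * u k) * φ k ^ (2 * D + 1)
          ≤ (ε * φ k ^ m) * φ k ^ (2 * D + 1) := by
        have e2 : (3 * (N k : ℝ) * W * W * u k) * φ k ^ (2 * D + 1)
            = 3 * ((W * φ k ^ D) * (W * φ k ^ D)) * (((N k : ℝ) * φ k) * u k) := by
          have : φ k ^ (2 * D + 1) = φ k ^ D * φ k ^ D * φ k := by
            rw [← pow_add, ← pow_succ]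
            congr 1
            omega
          rw [this]; ring
        rw [e2]
        have hWφ0 : 0 ≤ W * φ k ^ D := by positivity
        calc 3 * ((W * φ k ^ D) * (W * φ k ^ D)) * (((N k : ℝ) * φ k) * u k)
            ≤ 3 * ((K * (C + 1) ^ D) * (K * (C + 1) ^ D)) * (C * u k) := by
              apply mul_le_mul
              · apply mul_le_mul_of_nonneg_left _ (by norm_num)
                exact mul_le_mul hWφ hWφ hWφ0 (by positivity)
              · exact mul_le_mul_of_nonneg_right (hNC k) hu0
              · positivity
              · positivity
          _ = c₁ * u k := by rw [hc1def]; ring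
          _ ≤ c₁ * (δ * φ k ^ (m + (2 * D + 1))) :=
              mul_le_mul_of_nonneg_left huk (le_of_lt hc₁pos)
          _ = (c₁ * δ) * φ k ^ (m + (2 * D + 1)) := by ring
          _ ≤ ε * φ k ^ (m + (2 * D + 1)) :=
              mul_le_mul_of_nonneg_right hδ2 (by positivity)
          _ = (ε * φ k ^ m) * φ k ^ (2 * D + 1) := by
              rw [pow_add]; ring
      exact le_of_mul_le_mul_right h8 hφ2D1
    exact le_trans hfin hmain
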